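/- Let M = (ℰ, 𝓘) be a matroid on a finite ground set ℰ with |ℰ| ≥ 2, with rank function r : 2^{ℰ} → ℤ_{≥0} given by r(S) = max{|I| : I ∈ 𝓘, I ⊆ S}. Let γ be a fractional partition with respect to a family 𝓕 of subsets of ℰ satisfying the standing assumptions. Then ∑_{F ∈ 𝓕} γ(F) r(F) = r(ℰ) if and only if there exists A ⊆ ℰ such that 𝓘 = 2^A (the independent sets are exactly all subsets of A). -/
import Mathlib

open Finset
open scoped Classical BigOperators

section Aux
variable {E : Type} [Fintype E] [DecidableEq E]

lemma rank_le' {𝓘 : Set (Finset E)} {r : Finset E → ℕ}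
    (hr : ∀ A : Finset E, r A = (A.powerset.filter (fun I => I ∈ 𝓘)).sup Finset.card)
    {I S : Finset E} (hI : I ∈ 𝓘) (hIS : I ⊆ S) : I.card ≤ r S := by
  rw [hr]
  exact Finset.le_sup (by simp [Finset.mem_filter, Finset.mem_powerset, hIS, hI])

lemma rank_achieved' {𝓘 : Set (Finset E)} (hempty : (∅ : Finset E) ∈ 𝓘)
    {r : Finset E → ℕ}
    (hr : ∀ A : Finset E, r A = (A.powerset.filter (fun I => I ∈ 𝓘)).sup Finset.card)
    (S : Finset E) : ∃ J, J ∈ 𝓘 ∧ J ⊆ S ∧ J.card = r S := by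
  have hne : (S.powerset.filter (fun I => I ∈ 𝓘)).Nonempty :=
    ⟨∅, by simp [hempty]⟩
  obtain ⟨J, hJ, hJ2⟩ := Finset.exists_mem_eq_sup _ hne Finset.card
  simp only [Finset.mem_filter, Finset.mem_powerset] at hJ
  exact ⟨J, hJ.2, hJ.1, by rw [hr]; exact hJ2.symm⟩

lemma extend_aux' {𝓘 : Set (Finset E)} (hempty : (∅ : Finset E) ∈ 𝓘)
    (hexch : ∀ I₁ I₂ : Finset E, I₁ ∈ 𝓘 → I₂ ∈ 𝓘 → I₁.card < I₂.card →
      ∃ e ∈ I₂ \ I₁, insert e I₁ ∈ 𝓘)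
    {r : Finset E → ℕ}
    (hr : ∀ A : Finset E, r A = (A.powerset.filter (fun I => I ∈ 𝓘)).sup Finset.card)
    (S : Finset E) :
    ∀ n (I : Finset E), I ∈ 𝓘 → I ⊆ S → r S ≤ I.card + n →
      ∃ J, I ⊆ J ∧ J ⊆ S ∧ J ∈ 𝓘 ∧ J.card = r S := by
  intro n
  induction n with
  | zero =>
    intro I hI hIS hn
    exact ⟨I, subset_rfl, hIS, hI, le_antisymm (rank_le' hr hI hIS) (by omega)⟩
  | succ n ih =>
    intro I hI hIS hn
    by_cases h : I.card = r S
    · exact ⟨I, subset_rfl, hIS, hI, h⟩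
    · have hlt : I.card < r S := lt_of_le_of_ne (rank_le' hr hI hIS) h
      obtain ⟨J0, hJ0, hJ0S, hJ0card⟩ := rank_achieved' hempty hr S
      obtain ⟨e, he, hins⟩ := hexch I J0 hI hJ0 (by omega)
      have heS : e ∈ S := hJ0S (Finset.mem_sdiff.mp he).1
      have hsub : insert e I ⊆ S := Finset.insert_subset heS hIS
      have hcard : (insert e I).card = I.card + 1 :=
        Finset.card_insert_of_notMem (Finset.mem_sdiff.mp he).2
      obtain ⟨J, h1, h2, h3, h4⟩ := ih (insert e I) hins hsub (by omega)
      exact ⟨J, (Finset.subset_insert _ _).trans h1, h2, h3, h4⟩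

lemma count_lemma' {ι : Type} [Fintype ι] (F : ι → Finset E) (γ : ι → ℝ)
    (hfrac : ∀ e : E, ∑ k ∈ Finset.univ.filter (fun k => e ∈ F k), γ k = 1)
    (T : Finset E) : ∑ k : ι, γ k * ((F k ∩ T).card : ℝ) = T.card := by
  have h1 : ∀ k, γ k * ((F k ∩ T).card : ℝ) = ∑ e ∈ T, if e ∈ F k then γ k else 0 := by
    intro k
    have : F k ∩ T = T.filter (fun e => e ∈ F k) := by
      ext x; simp [Finset.mem_inter, and_comm]
    rw [this, Finset.card_filter]
    push_cast
    rw [Finset.mul_sum]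
    refine Finset.sum_congr rfl fun e _ => ?_
    split <;> simp
  calc ∑ k : ι, γ k * ((F k ∩ T).card : ℝ)
      = ∑ k : ι, ∑ e ∈ T, (if e ∈ F k then γ k else 0) :=
        Finset.sum_congr rfl fun k _ => h1 k
    _ = ∑ e ∈ T, ∑ k : ι, (if e ∈ F k then γ k else 0) := Finset.sum_comm
    _ = ∑ e ∈ T, (1 : ℝ) := by
        refine Finset.sum_congr rfl fun e _ => ?_
        rw [← hfrac e, Finset.sum_filter]
    _ = T.card := by simp

end Aux

theorem stmt_13 (E : Type) [Fintype E] [DecidableEq E] (hE : 2 ≤ Fintype.card E)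
    (𝓘 : Set (Finset E))
    (hempty : ∅ ∈ 𝓘)
    (hdown : ∀ I₁ I₂ : Finset E, I₂ ∈ 𝓘 → I₁ ⊆ I₂ → I₁ ∈ 𝓘)
    (hexch : ∀ I₁ I₂ : Finset E, I₁ ∈ 𝓘 → I₂ ∈ 𝓘 → I₁.card < I₂.card →
      ∃ e ∈ I₂ \ I₁, insert e I₁ ∈ 𝓘)
    (r : Finset E → ℕ)
    (hr : ∀ A : Finset E, r A = (A.powerset.filter (fun I => I ∈ 𝓘)).sup Finset.card)
    (ι : Type) [Fintype ι] (F : ι → Finset E) (γ : ι → ℝ)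
    (hproper : ∀ k, F k ≠ Finset.univ)
    (hpos : ∀ k, 0 < γ k)
    (hsep : ∀ e e' : E, e ≠ e' → ¬ (∀ k, e ∈ F k ↔ e' ∈ F k))
    (hfrac : ∀ e : E, ∑ k ∈ Finset.univ.filter (fun k => e ∈ F k), γ k = 1) :
    (∑ k : ι, γ k * (r (F k) : ℝ)) = (r Finset.univ : ℝ) ↔
      ∃ A : Finset E, ∀ I : Finset E, I ∈ 𝓘 ↔ I ⊆ A := by
  constructor
  · intro hsum
    -- every base B satisfies (F k ∩ B).card = r (F k) for all k
    have hbase : ∀ B : Finset E, B ∈ 𝓘 → B.card = r Finset.univ →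
        ∀ k, (F k ∩ B).card = r (F k) := by
      intro B hB hBcard k
      have hcount := count_lemma' F γ hfrac B
      have hzero : ∑ k : ι, γ k * ((r (F k) : ℝ) - ((F k ∩ B).card : ℝ)) = 0 := by
        have : ∑ k : ι, γ k * ((r (F k) : ℝ) - ((F k ∩ B).card : ℝ))
            = (∑ k : ι, γ k * (r (F k) : ℝ)) - ∑ k : ι, γ k * ((F k ∩ B).card : ℝ) := by
          rw [← Finset.sum_sub_distrib]
          exact Finset.sum_congr rfl fun k _ => by ring
        rw [this, hsum, hcount, hBcard]
        ring
      have hnonneg : ∀ j ∈ (Finset.univ : Finset ι),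
          0 ≤ γ j * ((r (F j) : ℝ) - ((F j ∩ B).card : ℝ)) := by
        intro j _
        have hle : ((F j ∩ B).card : ℝ) ≤ (r (F j) : ℝ) := by
          have : (F j ∩ B).card ≤ r (F j) :=
            rank_le' hr (hdown _ B hB Finset.inter_subset_right) Finset.inter_subset_left
          exact_mod_cast this
        have := (hpos j).le
        nlinarith
      have := (Finset.sum_eq_zero_iff_of_nonneg hnonneg).mp hzero k (Finset.mem_univ k)
      have hne : γ k ≠ 0 := ne_of_gt (hpos k)
      have : (r (F k) : ℝ) - ((F k ∩ B).card : ℝ) = 0 := by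
        rcases mul_eq_zero.mp this with h | h
        · exact absurd h hne
        · exact h
      have : ((F k ∩ B).card : ℝ) = (r (F k) : ℝ) := by linarith
      exact_mod_cast this
    -- A := set of non-loops
    refine ⟨Finset.univ.filter (fun e => ({e} : Finset E) ∈ 𝓘), fun I => ⟨?_, ?_⟩⟩
    · intro hI e he
      simp only [Finset.mem_filter, Finset.mem_univ, true_and]
      exact hdown {e} I hI (by simpa using he)
    · intro hIA
      by_contra hInot
      -- minimal dependent subset C of I
      have hTne : (I.powerset.filter (fun C => C ∉ 𝓘)).Nonempty :=
        ⟨I, by simp [hInot]⟩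
      obtain ⟨C, hCT, hmin⟩ := Finset.exists_min_image _ Finset.card hTne
      simp only [Finset.mem_filter, Finset.mem_powerset] at hCT
      obtain ⟨hCI, hCnot⟩ := hCT
      have hsub : ∀ D : Finset E, D ⊆ C → D ≠ C → D ∈ 𝓘 := by
        intro D hDC hne
        by_contra hD
        have : C.card ≤ D.card :=
          hmin D (by simp [Finset.mem_filter, Finset.mem_powerset, hDC.trans hCI, hD])
        have : D.card < C.card := Finset.card_lt_card (ssubset_of_subset_of_ne hDC hne)
        omega
      have hC2 : 1 < C.card := by
        rcases Nat.lt_or_ge C.card 2 with h | h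
        · interval_cases hc : C.card
          · exact absurd (Finset.card_eq_zero.mp hc ▸ hempty) hCnot
          · obtain ⟨e, hce⟩ := Finset.card_eq_one.mp hc
            have : e ∈ I := hCI (hce ▸ Finset.mem_singleton_self e)
            have := hIA this
            simp only [Finset.mem_filter] at this
            exact absurd (hce ▸ this.2) hCnot
        · omega
      obtain ⟨x0, hx0, y0, hy0, hxy0⟩ := Finset.one_lt_card.mp hC2
      obtain ⟨k, hk⟩ := not_forall.mp (hsep x0 y0 hxy0)
      -- key symmetric argument
      have key : ∀ x y : E, x ∈ C → y ∈ C → x ≠ y → x ∈ F k → y ∉ F k → False := by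
        intro x y hx hy hxy hxF hyF
        have hCy : C.erase y ∈ 𝓘 := hsub _ (Finset.erase_subset _ _)
          (fun h => Finset.notMem_erase y C (by rw [h]; exact hy))
        obtain ⟨B₁, hCB₁, _, hB₁𝓘, hB₁card⟩ :=
          extend_aux' hempty hexch hr Finset.univ (r Finset.univ) (C.erase y) hCy
            (Finset.subset_univ _) (by omega)
        have hxB₁ : x ∈ B₁ := hCB₁ (Finset.mem_erase.mpr ⟨hxy, hx⟩)
        have hyB₁ : y ∉ B₁ := by
          intro hyB
          refine hCnot (hdown C B₁ hB₁𝓘 ?_)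
          intro z hz
          by_cases hzy : z = y
          · exact hzy ▸ hyB
          · exact hCB₁ (Finset.mem_erase.mpr ⟨hzy, hz⟩)
        set S : Finset E := insert y (B₁.erase x) with hS
        have hJS : C.erase x ⊆ S := by
          intro z hz
          obtain ⟨hzx, hzC⟩ := Finset.mem_erase.mp hz
          by_cases hzy : z = y
          · exact hzy ▸ Finset.mem_insert_self y _
          · exact Finset.mem_insert_of_mem
              (Finset.mem_erase.mpr ⟨hzx, hCB₁ (Finset.mem_erase.mpr ⟨hzy, hzC⟩)⟩)
        have hJ𝓘 : C.erase x ∈ 𝓘 := hsub _ (Finset.erase_subset _ _)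
          (fun h => Finset.notMem_erase x C (by rw [h]; exact hx))
        obtain ⟨J, hJJ, hJS', hJ𝓘', hJcard⟩ :=
          extend_aux' hempty hexch hr S (r S) (C.erase x) hJ𝓘 hJS (by omega)
        by_cases hrS : r S = r Finset.univ
        · -- J is a base
          have h1 : (F k ∩ J).card = r (F k) := hbase J hJ𝓘' (hJcard.trans hrS) k
          have h2 : (F k ∩ B₁).card = r (F k) := hbase B₁ hB₁𝓘 hB₁card k
          have hsubset : F k ∩ J ⊆ (F k ∩ B₁).erase x := by
            intro z hz
            obtain ⟨hzF, hzJ⟩ := Finset.mem_inter.mp hz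
            have hzS : z ∈ S := hJS' hzJ
            rcases Finset.mem_insert.mp hzS with h | h
            · exact absurd (h ▸ hzF) hyF
            · obtain ⟨hzx, hzB⟩ := Finset.mem_erase.mp h
              exact Finset.mem_erase.mpr ⟨hzx, Finset.mem_inter.mpr ⟨hzF, hzB⟩⟩
          have hxFB : x ∈ F k ∩ B₁ := Finset.mem_inter.mpr ⟨hxF, hxB₁⟩
          have hle : (F k ∩ J).card ≤ (F k ∩ B₁).card - 1 := by
            have := Finset.card_le_card hsubset
            rw [Finset.card_erase_of_mem hxFB] at this
            exact this
          have hpos1 : 1 ≤ (F k ∩ B₁).card := Finset.card_pos.mpr ⟨x, hxFB⟩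
          omega
        · have hrSle : r S ≤ r Finset.univ := by
            obtain ⟨J', hJ'𝓘, hJ'S, hJ'card⟩ := rank_achieved' hempty hr S
            exact hJ'card ▸ rank_le' hr hJ'𝓘 (Finset.subset_univ _)
          have hrSlt : r S < r Finset.univ := lt_of_le_of_ne hrSle hrS
          obtain ⟨z, hz, hins⟩ := hexch J B₁ hJ𝓘' hB₁𝓘 (by omega)
          obtain ⟨hzB₁, hzJ⟩ := Finset.mem_sdiff.mp hz
          by_cases hzx : z = x
          · refine hCnot (hdown C (insert z J) hins ?_)
            intro w hw
            by_cases hwx : w = x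
            · exact hwx ▸ hzx ▸ Finset.mem_insert_self z J
            · exact Finset.mem_insert_of_mem (hJJ (Finset.mem_erase.mpr ⟨hwx, hw⟩))
          · have hzS : z ∈ S := Finset.mem_insert_of_mem (Finset.mem_erase.mpr ⟨hzx, hzB₁⟩)
            have hinsS : insert z J ⊆ S := Finset.insert_subset hzS hJS'
            have := rank_le' hr hins hinsS
            rw [Finset.card_insert_of_notMem hzJ, hJcard] at this
            omega
      by_cases hx : x0 ∈ F k
      · have hy : y0 ∉ F k := fun hy => hk (iff_of_true hx hy)
        exact key x0 y0 hx0 hy0 hxy0 hx hy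
      · have hy : y0 ∈ F k := by
          by_contra hy
          exact hk (iff_of_false hx hy)
        exact key y0 x0 hy0 hx0 hxy0.symm hy hx
  · rintro ⟨A, hA⟩
    have hrank : ∀ S : Finset E, r S = (S ∩ A).card := by
      intro S
      rw [hr]
      apply le_antisymm
      · apply Finset.sup_le
        intro I hI
        simp only [Finset.mem_filter, Finset.mem_powerset] at hI
        exact Finset.card_le_card (Finset.subset_inter hI.1 ((hA I).mp hI.2))
      · exact Finset.le_sup (by
          simp only [Finset.mem_filter, Finset.mem_powerset]
          exact ⟨Finset.inter_subset_left, (hA _).mpr Finset.inter_subset_right⟩)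
    have h1 : ∑ k : ι, γ k * (r (F k) : ℝ) = ∑ k : ι, γ k * ((F k ∩ A).card : ℝ) :=
      Finset.sum_congr rfl fun k _ => by rw [hrank]
    rw [h1, count_lemma' F γ hfrac A, hrank, Finset.univ_inter]
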